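/- arXiv:1109.3920 — 2 statements merged into one kernel-verified Lean document; each statement's English description precedes it below -/
import Mathlib

section
/- Let 0 < r < 1 and let A_r = {z ∈ ℂ : r < |z| < 1} be the annulus. Then for every z ∈ A_r, the squeezing function of A_r satisfies s_{A_r}(z) ≥ tanh(artanh|z| − artanh r). In particular s_{A_r}(z) → 1 as |z| → 1. -/
open Metric

/-- The squeezing function of a bounded planar domain `D ⊆ ℂ` at a point `p ∈ D`:
the supremum of all `r > 0` such that some injective holomorphic map `f : D → Δ`
with `f p = 0` satisfies `Δ_r ⊆ f '' D`. -/
noncomputable def squeezingFn (D : Set ℂ) (p : ℂ) : ℝ :=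
  sSup { r : ℝ | ∃ f : ℂ → ℂ,
    DifferentiableOn ℂ f D ∧ Set.InjOn f D ∧ f '' D ⊆ ball (0 : ℂ) 1 ∧ f p = 0 ∧
    0 < r ∧ ball (0 : ℂ) r ⊆ f '' D }

/-- Inverse hyperbolic tangent: `artanh x = (1/2) log((1+x)/(1-x))`. -/
noncomputable def artanh (x : ℝ) : ℝ := Real.log ((1 + x) / (1 - x)) / 2

lemma tanh_half_log {A : ℝ} (hA : 0 < A) :
    Real.tanh (Real.log A / 2) = (A - 1) / (A + 1) := by
  have he : Real.exp (Real.log A / 2) ^ 2 = A := by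
    rw [sq, ← Real.exp_add]
    rw [show Real.log A / 2 + Real.log A / 2 = Real.log A by ring]
    exact Real.exp_log hA
  have hepos : 0 < Real.exp (Real.log A / 2) := Real.exp_pos _
  rw [Real.tanh_eq_sinh_div_cosh, Real.sinh_eq, Real.cosh_eq, Real.exp_neg]
  set e := Real.exp (Real.log A / 2) with hedef
  have he0 : e ≠ 0 := ne_of_gt hepos
  have hA1 : A + 1 ≠ 0 := by positivity
  field_simp
  nlinarith [he, hepos]

lemma artanh_sub {r t : ℝ} (hr0 : 0 < r) (hr1 : r < 1) (ht0 : 0 < t) (ht1 : t < 1) :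
    Real.tanh (artanh t - artanh r) = (t - r) / (1 - t * r) := by
  have hX : (0:ℝ) < (1 + t) / (1 - t) := by
    apply div_pos <;> linarith
  have hY : (0:ℝ) < (1 + r) / (1 - r) := by
    apply div_pos <;> linarith
  have hsub : artanh t - artanh r = Real.log ((1 + t) / (1 - t) / ((1 + r) / (1 - r))) / 2 := by
    unfold artanh
    rw [Real.log_div (ne_of_gt hX) (ne_of_gt hY)]
    ring
  rw [hsub, tanh_half_log (div_pos hX hY)]
  have h1 : (1:ℝ) - t ≠ 0 := by linarith
  have h2 : (1:ℝ) + r ≠ 0 := by linarith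
  have h3 : (1:ℝ) - r ≠ 0 := by linarith
  have h4 : (1:ℝ) + t ≠ 0 := by linarith
  have h5 : (1:ℝ) - t * r ≠ 0 := by nlinarith
  have h6 : (1 + t) / (1 - t) / ((1 + r) / (1 - r)) + 1 ≠ 0 := by positivity
  rw [div_eq_div_iff h6 h5]
  field_simp
  ring

lemma normSq_moebius_id (a z : ℂ) :
    Complex.normSq (1 - (starRingEnd ℂ) a * z) =
      Complex.normSq (z - a) + (1 - Complex.normSq a) * (1 - Complex.normSq z) := by
  simp only [Complex.normSq_apply, Complex.sub_re, Complex.sub_im, Complex.mul_re,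
    Complex.mul_im, Complex.one_re, Complex.one_im, Complex.conj_re, Complex.conj_im]
  ring

lemma abs_moebius_lt {a z : ℂ} (ha : ‖a‖ < 1) (hz : ‖z‖ < 1) :
    ‖z - a‖ < ‖1 - (starRingEnd ℂ) a * z‖ := by
  have h1 : Complex.normSq a < 1 := by
    rw [← Complex.sq_norm]; nlinarith [norm_nonneg a]
  have h2 : Complex.normSq z < 1 := by
    rw [← Complex.sq_norm]; nlinarith [norm_nonneg z]
  have key := normSq_moebius_id a z
  have h3 : Complex.normSq (z - a) < Complex.normSq (1 - (starRingEnd ℂ) a * z) := by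
    nlinarith
  rw [← Complex.sq_norm, ← Complex.sq_norm] at h3
  nlinarith [norm_nonneg (z - a), norm_nonneg (1 - (starRingEnd ℂ) a * z)]

lemma moebius_denom_ne {a z : ℂ} (ha : ‖a‖ < 1) (hz : ‖z‖ < 1) :
    (1 : ℂ) - (starRingEnd ℂ) a * z ≠ 0 := by
  intro h
  have : ‖(starRingEnd ℂ) a * z‖ < 1 := by
    rw [norm_mul, Complex.norm_conj]
    calc ‖a‖ * ‖z‖ ≤ 1 * ‖z‖ := by
          apply mul_le_mul_of_nonneg_right (le_of_lt ha) (norm_nonneg z)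
      _ < 1 := by simpa using hz
  have h1 : (starRingEnd ℂ) a * z = 1 := by
    have := sub_eq_zero.mp h; exact this.symm
  rw [h1] at this
  simp at this

lemma arith_contra {r t s K m W : ℝ} (hr0 : 0 < r) (hr1 : r < 1) (hp1 : r < t)
    (hp2 : t < 1) (hs0 : 0 ≤ s) (hs : s ≤ r) (hK0 : 0 < K) (hmw : m = W * K)
    (hm_ge : t - s ≤ m) (hK2 : K ^ 2 = m ^ 2 + (1 - t ^ 2) * (1 - s ^ 2))
    (hW0 : 0 ≤ W) (hw : W < (t - r) / (1 - t * r)) : False := by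
  have htr : 0 < 1 - t * r := by nlinarith
  have hts : 0 < 1 - t * s := by nlinarith
  have hts' : 0 < t - s := by linarith
  have hm0 : 0 ≤ m := by linarith
  have h1 : (t - s) ^ 2 ≤ m ^ 2 := by nlinarith
  have h2 : (0:ℝ) ≤ (1 - t ^ 2) * (1 - s ^ 2) := mul_nonneg (by nlinarith) (by nlinarith)
  have hsq : ((t - s) * K) ^ 2 ≤ (m * (1 - t * s)) ^ 2 := by
    nlinarith [mul_le_mul_of_nonneg_right h1 h2]
  have ha : 0 ≤ m * (1 - t * s) := mul_nonneg hm0 hts.le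
  have step1 : (t - s) * K ≤ m * (1 - t * s) :=
    le_of_pow_le_pow_left₀ two_ne_zero ha hsq
  have h2' : (0:ℝ) ≤ (r - s) * (1 - t ^ 2) := mul_nonneg (by linarith) (by nlinarith)
  have step2 : (t - r) * (1 - t * s) ≤ (t - s) * (1 - t * r) := by nlinarith
  have hWr : (t - r) / (1 - t * r) ≤ W := by
    rw [div_le_iff₀ htr]
    have c1 : (t - r) * (1 - t * s) * K ≤ (t - s) * (1 - t * r) * K :=
      mul_le_mul_of_nonneg_right step2 hK0.le
    have c2 : (t - s) * K * (1 - t * r) ≤ m * (1 - t * s) * (1 - t * r) :=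
      mul_le_mul_of_nonneg_right step1 htr.le
    have hpos : 0 < (1 - t * s) * K := mul_pos hts hK0
    have c4 : (t - r) * ((1 - t * s) * K) ≤ W * (1 - t * r) * ((1 - t * s) * K) := by
      calc (t - r) * ((1 - t * s) * K) = (t - r) * (1 - t * s) * K := by ring
        _ ≤ (t - s) * (1 - t * r) * K := c1
        _ = (t - s) * K * (1 - t * r) := by ring
        _ ≤ m * (1 - t * s) * (1 - t * r) := c2
        _ = W * (1 - t * r) * ((1 - t * s) * K) := by rw [hmw]; ring
    exact le_of_mul_le_mul_right c4 hpos
  linarith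

lemma squeeze_mem (r : ℝ) (hr0 : 0 < r) (hr1 : r < 1) {p : ℂ}
    (hp1 : r < ‖p‖) (hp2 : ‖p‖ < 1) :
    (‖p‖ - r) / (1 - ‖p‖ * r) ∈
      { x : ℝ | ∃ f : ℂ → ℂ,
        DifferentiableOn ℂ f {z : ℂ | r < ‖z‖ ∧ ‖z‖ < 1} ∧
        Set.InjOn f {z : ℂ | r < ‖z‖ ∧ ‖z‖ < 1} ∧
        f '' {z : ℂ | r < ‖z‖ ∧ ‖z‖ < 1} ⊆ ball (0 : ℂ) 1 ∧
        f p = 0 ∧ 0 < x ∧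
        ball (0 : ℂ) x ⊆ f '' {z : ℂ | r < ‖z‖ ∧ ‖z‖ < 1} } := by
  set D := {z : ℂ | r < ‖z‖ ∧ ‖z‖ < 1} with hD
  set t := ‖p‖ with htdef
  have ht0 : 0 < t := lt_trans hr0 hp1
  have htr : 0 < 1 - t * r := by nlinarith
  set ρ := (t - r) / (1 - t * r) with hρdef
  have hρ0 : 0 < ρ := div_pos (by linarith) htr
  have hρ1 : ρ < 1 := by
    rw [div_lt_one htr]; nlinarith
  refine ⟨fun z => (z - p) / (1 - (starRingEnd ℂ) p * z), ?_, ?_, ?_, ?_, hρ0, ?_⟩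
  · -- differentiable
    apply DifferentiableOn.div
    · exact (differentiable_id.sub_const p).differentiableOn
    · exact ((differentiable_const (1:ℂ)).sub ((differentiable_const _).mul differentiable_id)).differentiableOn
    · intro z hz
      exact moebius_denom_ne hp2 hz.2
  · -- injective
    intro z1 hz1 z2 hz2 h
    have d1 := moebius_denom_ne hp2 hz1.2
    have d2 := moebius_denom_ne hp2 hz2.2
    rw [div_eq_div_iff d1 d2] at h
    have hpp : (1 : ℂ) - (starRingEnd ℂ) p * p ≠ 0 := moebius_denom_ne hp2 hp2
    have : ((1 : ℂ) - (starRingEnd ℂ) p * p) * (z1 - z2) = 0 := by linear_combination h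
    rcases mul_eq_zero.mp this with h' | h'
    · exact absurd h' hpp
    · exact sub_eq_zero.mp h'
  · -- maps into unit ball
    rintro w ⟨z, hz, rfl⟩
    rw [mem_ball, dist_zero_right, norm_div]
    rw [div_lt_one (by
      have := moebius_denom_ne hp2 hz.2
      exact (norm_pos_iff.mpr this))]
    exact abs_moebius_lt hp2 hz.2
  · simp
  · -- ball ρ ⊆ image
    intro w hw
    rw [mem_ball, dist_zero_right] at hw
    have hw1 : ‖w‖ < 1 := lt_trans hw hρ1
    have hd : (1 : ℂ) - (starRingEnd ℂ) (-p) * w ≠ 0 := moebius_denom_ne (by simpa using hp2) hw1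
    have hd' : (1 : ℂ) + (starRingEnd ℂ) p * w ≠ 0 := by
      rw [map_neg, neg_mul, sub_neg_eq_add] at hd; exact hd
    set u := (w + p) / (1 + (starRingEnd ℂ) p * w) with hudef
    have hu_eq : u * (1 + (starRingEnd ℂ) p * w) = w + p := div_mul_cancel₀ _ hd'
    -- |u| < 1
    have hu1 : ‖u‖ < 1 := by
      rw [hudef, norm_div, div_lt_one (norm_pos_iff.mpr hd')]
      have := abs_moebius_lt (a := -p) (z := w) (by simpa using hp2) hw1
      rw [map_neg, neg_mul, sub_neg_eq_add, sub_neg_eq_add] at this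
      exact this
    -- f u = w
    have hden : (1 : ℂ) - (starRingEnd ℂ) p * u ≠ 0 := moebius_denom_ne hp2 hu1
    have hE : u - p = w * (1 - (starRingEnd ℂ) p * u) := by
      have h2 : ((1 : ℂ) + (starRingEnd ℂ) p * w) ≠ 0 := hd'
      field_simp [hudef]
      linear_combination hu_eq
    have hfu : (u - p) / (1 - (starRingEnd ℂ) p * u) = w := by
      rw [hE, mul_div_assoc, div_self hden, mul_one]
    -- r < |u|
    have hur : r < ‖u‖ := by
      by_contra hs
      push_neg at hs
      have hs0 : 0 ≤ ‖u‖ := norm_nonneg u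
      have hK0 : 0 < ‖1 - (starRingEnd ℂ) p * u‖ := norm_pos_iff.mpr hden
      have hmw : ‖u - p‖ = ‖w‖ * ‖1 - (starRingEnd ℂ) p * u‖ := by
        rw [hE, norm_mul]
      have hm_ge : t - ‖u‖ ≤ ‖u - p‖ := by
        have h := norm_sub_norm_le p u
        calc t - ‖u‖ ≤ ‖p - u‖ := h
          _ = ‖u - p‖ := norm_sub_rev p u
      have hK2 : ‖1 - (starRingEnd ℂ) p * u‖ ^ 2 =
          ‖u - p‖ ^ 2 + (1 - t ^ 2) * (1 - ‖u‖ ^ 2) := by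
        have h := normSq_moebius_id p u
        rw [← Complex.sq_norm, ← Complex.sq_norm, ← Complex.sq_norm, ← Complex.sq_norm] at h
        exact h
      exact arith_contra hr0 hr1 hp1 hp2 hs0 hs hK0 hmw hm_ge hK2 (norm_nonneg w) hw
    exact ⟨u, ⟨hur, hu1⟩, hfu⟩

lemma squeeze_lb (r : ℝ) (hr0 : 0 < r) (hr1 : r < 1) {p : ℂ}
    (hp1 : r < ‖p‖) (hp2 : ‖p‖ < 1) :
    (‖p‖ - r) / (1 - ‖p‖ * r) ≤
      squeezingFn {z : ℂ | r < ‖z‖ ∧ ‖z‖ < 1} p := by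
  apply le_csSup
  · refine ⟨1, fun x hx => ?_⟩
    obtain ⟨f, _, _, himg, _, hx0, hball⟩ := hx
    by_contra h
    push_neg at h
    have hc : (((x + 1) / 2 : ℝ) : ℂ) ∈ ball (0 : ℂ) x := by
      rw [mem_ball, dist_zero_right, Complex.norm_real, Real.norm_eq_abs,
        abs_of_pos (by linarith)]
      linarith
    have := himg (hball hc)
    rw [mem_ball, dist_zero_right, Complex.norm_real, Real.norm_eq_abs,
      abs_of_pos (by linarith)] at this
    linarith
  · exact squeeze_mem r hr0 hr1 hp1 hp2

/-- For the annulus `A_r = {r < |z| < 1}` (with `0 < r < 1`) one has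
`s_{A_r}(z) ≥ tanh(artanh|z| - artanh r)` for every `z ∈ A_r`; in particular
`s_{A_r}(z) → 1` as `|z| → 1`. -/
theorem stmt_11 (r : ℝ) (hr0 : 0 < r) (hr1 : r < 1) :
    (∀ z ∈ {z : ℂ | r < ‖z‖ ∧ ‖z‖ < 1},
      Real.tanh (artanh (‖z‖) - artanh r) ≤
        squeezingFn {z : ℂ | r < ‖z‖ ∧ ‖z‖ < 1} z) ∧
    (∀ ε > 0, ∃ t, t < 1 ∧
      ∀ z ∈ {z : ℂ | r < ‖z‖ ∧ ‖z‖ < 1}, t < ‖z‖ →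
        1 - ε < squeezingFn {z : ℂ | r < ‖z‖ ∧ ‖z‖ < 1} z) := by
  have main : ∀ z ∈ {z : ℂ | r < ‖z‖ ∧ ‖z‖ < 1},
      Real.tanh (artanh (‖z‖) - artanh r) ≤
        squeezingFn {z : ℂ | r < ‖z‖ ∧ ‖z‖ < 1} z := by
    intro z hz
    obtain ⟨hz1, hz2⟩ := hz
    rw [artanh_sub hr0 hr1 (lt_trans hr0 hz1) hz2]
    exact squeeze_lb r hr0 hr1 hz1 hz2
  refine ⟨main, fun ε hε => ?_⟩
  set ε' := min ε (1/2 : ℝ) with hε'def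
  have hε'0 : 0 < ε' := lt_min hε (by norm_num)
  have hε'h : ε' ≤ 1/2 := min_le_right _ _
  have hε'ε : ε' ≤ ε := min_le_left _ _
  have hden : 0 < 1 + (1 - ε') * r := by nlinarith
  refine ⟨(1 - ε' + r) / (1 + (1 - ε') * r), ?_, ?_⟩
  · rw [div_lt_one hden]; nlinarith
  · intro z hz htz
    obtain ⟨hz1, hz2⟩ := hz
    set s := ‖z‖ with hsdef
    have h1 := main z ⟨hz1, hz2⟩
    rw [artanh_sub hr0 hr1 (lt_trans hr0 hz1) hz2] at h1
    have hsr : 0 < 1 - s * r := by nlinarith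
    have key : 1 - ε' < (s - r) / (1 - s * r) := by
      rw [lt_div_iff₀ hsr]
      have := (div_lt_iff₀ hden).mp htz
      nlinarith
    calc 1 - ε ≤ 1 - ε' := by linarith
      _ < (s - r) / (1 - s * r) := key
      _ ≤ _ := h1
end

section
/- Let D be a bounded domain in ℂ and let p ∈ ℂ \ D be a point such that D̃ := D ∪ {p} is open (i.e. {p} is an isolated connected component of the complement of D). Then for every z ∈ D one has s_D(z) ≤ tanh(K_{D̃}(z, p)/2), where K_{D̃} is the Kobayashi distance on the domain D̃. In particular s_D(z) → 0 as z → p. -/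
open Metric

/-- The Poincaré distance on the unit disc: `ρ(a,b) = 2 artanh |(a-b)/(1 - ā b)|`. -/
noncomputable def poincareDist (a b : ℂ) : ℝ :=
  2 * artanh ‖(a - b) / (1 - (starRingEnd ℂ) a * b)‖

/-- The Kobayashi distance on a set `D`: the infimum over finite chains of holomorphic
discs `φ i : Δ → D` joining `x` to `y` of the sum of Poincaré distances. -/
noncomputable def kobayashiDist {E : Type*} [NormedAddCommGroup E] [NormedSpace ℂ E]
    (D : Set E) (x y : E) : ℝ :=
  sInf { t : ℝ | ∃ (k : ℕ) (φ : Fin (k + 1) → ℂ → E) (a b : Fin (k + 1) → ℂ),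
    (∀ i, DifferentiableOn ℂ (φ i) (Metric.ball (0 : ℂ) 1) ∧
      (φ i) '' (Metric.ball (0 : ℂ) 1) ⊆ D ∧
      a i ∈ Metric.ball (0 : ℂ) 1 ∧ b i ∈ Metric.ball (0 : ℂ) 1) ∧
    φ 0 (a 0) = x ∧ φ (Fin.last k) (b (Fin.last k)) = y ∧
    (∀ i : Fin k, φ i.castSucc (b i.castSucc) = φ i.succ (a i.succ)) ∧
    t = ∑ i, poincareDist (a i) (b i) }


open Complex Topology

lemma artanh_nonneg {x : ℝ} (hx : 0 ≤ x) : 0 ≤ artanh x := by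
  unfold artanh
  rcases lt_trichotomy x 1 with h | h | h
  · have : (1:ℝ) ≤ (1 + x) / (1 - x) := by
      rw [le_div_iff₀ (by linarith)]; linarith
    have := Real.log_nonneg this
    linarith
  · simp [h]
  · rw [← Real.log_neg_eq_log]
    have : (1:ℝ) ≤ -((1 + x) / (1 - x)) := by
      rw [← div_neg, neg_sub, le_div_iff₀ (by linarith)]; linarith
    have := Real.log_nonneg this
    linarith

lemma ratio_pos {x : ℝ} (h0 : 0 ≤ x) (h1 : x < 1) : 0 < (1 + x) / (1 - x) :=
  div_pos (by linarith) (by linarith)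

lemma artanh_exp {x : ℝ} (h0 : 0 ≤ x) (h1 : x < 1) :
    Real.exp (2 * artanh x) = (1 + x) / (1 - x) := by
  unfold artanh
  rw [mul_div_cancel₀ _ (two_ne_zero), Real.exp_log (ratio_pos h0 h1)]

lemma tanh_artanh {x : ℝ} (h0 : 0 ≤ x) (h1 : x < 1) : Real.tanh (artanh x) = x := by
  have he : Real.exp (artanh x) * Real.exp (artanh x) = (1 + x) / (1 - x) := by
    rw [← Real.exp_add, ← two_mul]; exact artanh_exp h0 h1
  have hep : 0 < Real.exp (artanh x) := Real.exp_pos _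
  rw [Real.tanh_eq_sinh_div_cosh, Real.sinh_eq, Real.cosh_eq, Real.exp_neg]
  have h2 : (1:ℝ) - x ≠ 0 := by linarith
  field_simp
  rw [sq, he]
  field_simp
  ring

lemma tanh_mono : StrictMono Real.tanh := by
  intro s t hst
  rw [Real.tanh_eq_sinh_div_cosh, Real.tanh_eq_sinh_div_cosh,
    div_lt_div_iff₀ (Real.cosh_pos _) (Real.cosh_pos _)]
  have h2 : Real.sinh (s - t) < 0 := by
    rw [← Real.sinh_zero]; exact Real.sinh_lt_sinh.mpr (by linarith)
  rw [Real.sinh_sub] at h2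
  nlinarith [Real.cosh_pos s, Real.cosh_pos t]

lemma artanh_mono {x y : ℝ} (h0 : 0 ≤ x) (hxy : x ≤ y) (h1 : y < 1) :
    artanh x ≤ artanh y := by
  unfold artanh
  have hx1 : x < 1 := lt_of_le_of_lt hxy h1
  have := Real.log_le_log (ratio_pos h0 hx1) (show (1+x)/(1-x) ≤ (1+y)/(1-y) by
    rw [div_le_div_iff₀ (by linarith) (by linarith)]; nlinarith)
  linarith

lemma artanh_add {x y : ℝ} (hx : 0 ≤ x) (hx1 : x < 1) (hy : 0 ≤ y) (hy1 : y < 1) :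
    artanh ((x + y) / (1 + x * y)) = artanh x + artanh y := by
  unfold artanh
  have hd : (0:ℝ) < 1 + x * y := by nlinarith
  have key : (1 + (x + y) / (1 + x * y)) / (1 - (x + y) / (1 + x * y))
      = ((1 + x) / (1 - x)) * ((1 + y) / (1 - y)) := by
    have h1x : (0:ℝ) < 1 - x := by linarith
    have h1y : (0:ℝ) < 1 - y := by linarith
    have hs : (0:ℝ) < 1 - (x + y) / (1 + x * y) := by
      rw [sub_pos, div_lt_one hd]; nlinarith
    rw [div_mul_div_comm, div_eq_div_iff hs.ne' (by positivity)]
    field_simp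
    ring
  rw [key, Real.log_mul (ratio_pos hx hx1).ne' (ratio_pos hy hy1).ne']
  ring
open Metric Complex Topology

noncomputable def mobius (c w : ℂ) : ℂ := (w - c) / (1 - (starRingEnd ℂ) c * w)

lemma normSq_identity (c w : ℂ) :
    normSq (1 - (starRingEnd ℂ) c * w) =
      normSq (w - c) + (1 - normSq c) * (1 - normSq w) := by
  simp only [normSq_apply, sub_re, sub_im, mul_re, mul_im, one_re, one_im, conj_re, conj_im]
  ring

lemma denom_pos {c w : ℂ} (hc : normSq c < 1) (hw : normSq w < 1) :
    0 < normSq (1 - (starRingEnd ℂ) c * w) := by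
  rw [normSq_identity]
  have := normSq_nonneg (w - c)
  nlinarith

lemma denom_ne_zero {c w : ℂ} (hc : ‖c‖ < 1) (hw : ‖w‖ < 1) :
    (1 : ℂ) - (starRingEnd ℂ) c * w ≠ 0 := by
  have := denom_pos (c := c) (w := w) (by rw [← Complex.sq_norm]; nlinarith [norm_nonneg c])
    (by rw [← Complex.sq_norm]; nlinarith [norm_nonneg w])
  intro h
  rw [h, normSq_zero] at this
  exact lt_irrefl 0 this

lemma mobius_abs_lt_one {c w : ℂ} (hc : ‖c‖ < 1) (hw : ‖w‖ < 1) :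
    ‖mobius c w‖ < 1 := by
  have hc2 : normSq c < 1 := by rw [← Complex.sq_norm]; nlinarith [norm_nonneg c]
  have hw2 : normSq w < 1 := by rw [← Complex.sq_norm]; nlinarith [norm_nonneg w]
  have hd := denom_pos hc2 hw2
  have hdne := denom_ne_zero hc hw
  rw [mobius, norm_div, div_lt_one (norm_pos_iff.2 hdne)]
  have h1 : (‖w - c‖)^2 < (‖1 - (starRingEnd ℂ) c * w‖)^2 := by
    rw [Complex.sq_norm, Complex.sq_norm, normSq_identity]
    nlinarith
  nlinarith [norm_nonneg (w - c), norm_nonneg (1 - (starRingEnd ℂ) c * w)]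

lemma mobius_self (c : ℂ) : mobius c c = 0 := by simp [mobius]

lemma mobius_zero_right (c : ℂ) : mobius c 0 = -c := by simp [mobius]

lemma mobius_neg_mobius {c w : ℂ} (hc : ‖c‖ < 1) (hw : ‖w‖ < 1) :
    mobius (-c) (mobius c w) = w := by
  have hd := denom_ne_zero hc hw
  have hc1 : (1 : ℂ) - (starRingEnd ℂ) c * c ≠ 0 := denom_ne_zero hc hc
  have e : (1:ℂ) - (starRingEnd ℂ) (-c) * mobius c w
      = (1 - (starRingEnd ℂ) c * c) / (1 - (starRingEnd ℂ) c * w) := by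
    rw [map_neg, mobius]; field_simp; ring
  have e2 : mobius c w - (-c) = w * (1 - (starRingEnd ℂ) c * c) / (1 - (starRingEnd ℂ) c * w) := by
    rw [mobius, sub_neg_eq_add, div_add' _ _ _ hd]; congr 1; ring
  rw [mobius, e, e2]
  rw [div_div_div_cancel_right₀ hd, mul_div_assoc, div_self hc1, mul_one]

lemma mobius_differentiableOn {c : ℂ} (hc : ‖c‖ < 1) :
    DifferentiableOn ℂ (mobius c) (ball 0 1) := by
  intro w hw
  rw [mem_ball_zero_iff] at hw
  exact (((differentiable_id.sub_const c).differentiableAt).div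
    ((differentiable_const (1:ℂ)).sub ((differentiable_const _).mul differentiable_id)
      |>.differentiableAt)
    (by simpa using denom_ne_zero hc hw)).differentiableWithinAt

lemma mobius_mapsTo {c : ℂ} (hc : ‖c‖ < 1) :
    Set.MapsTo (mobius c) (ball 0 1) (ball 0 1) := fun w hw => by
  rw [mem_ball_zero_iff] at *
  exact mobius_abs_lt_one hc hw

lemma abs_one_sub_conj (a b : ℂ) :
    ‖1 - (starRingEnd ℂ) a * b‖ = ‖1 - (starRingEnd ℂ) b * a‖ := by
  rw [← Complex.norm_conj]
  simp only [map_sub, map_one, map_mul, Complex.conj_conj]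
  rw [mul_comm]

lemma abs_mobius_symm (a b : ℂ) :
    ‖mobius a b‖ = ‖mobius b a‖ := by
  rw [mobius, mobius, norm_div, norm_div, norm_sub_rev, abs_one_sub_conj]

lemma poincareDist_eq (a b : ℂ) :
    poincareDist a b = 2 * artanh (‖mobius b a‖) := by
  rw [poincareDist, mobius, norm_div, norm_div, abs_one_sub_conj]

lemma poincareDist_eq' (a b : ℂ) :
    poincareDist a b = 2 * artanh (‖mobius a b‖) := by
  rw [poincareDist_eq, abs_mobius_symm]

lemma poincareDist_symm (a b : ℂ) : poincareDist a b = poincareDist b a := by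
  rw [poincareDist_eq, poincareDist_eq', abs_mobius_symm]

lemma artanh_zero : artanh 0 = 0 := by simp [artanh]

lemma poincareDist_nonneg (a b : ℂ) : 0 ≤ poincareDist a b := by
  have := artanh_nonneg (norm_nonneg ((a - b) / (1 - (starRingEnd ℂ) a * b)))
  rw [poincareDist]; linarith

lemma poincareDist_self (a : ℂ) : poincareDist a a = 0 := by
  simp [poincareDist, artanh_zero]

lemma poincareDist_zero_left (w : ℂ) : poincareDist 0 w = 2 * artanh (‖w‖) := by
  simp [poincareDist]

lemma poincareDist_zero_right (w : ℂ) : poincareDist w 0 = 2 * artanh (‖w‖) := by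
  simp [poincareDist]

lemma schwarz_pick_abs {g : ℂ → ℂ} (hg : DifferentiableOn ℂ g (ball 0 1))
    (hm : Set.MapsTo g (ball 0 1) (ball 0 1)) {a b : ℂ}
    (ha : ‖a‖ < 1) (hb : ‖b‖ < 1) :
    ‖mobius (g a) (g b)‖ ≤ ‖mobius a b‖ := by
  have hga : ‖g a‖ < 1 := by
    have := hm (mem_ball_zero_iff.2 ha); rwa [mem_ball_zero_iff] at this
  have hna : ‖-a‖ < 1 := by rwa [norm_neg]
  set h : ℂ → ℂ := mobius (g a) ∘ (g ∘ mobius (-a)) with hh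
  have hdiff : DifferentiableOn ℂ h (ball 0 1) :=
    (mobius_differentiableOn hga).comp
      (hg.comp (mobius_differentiableOn hna) (mobius_mapsTo hna))
      (hm.comp (mobius_mapsTo hna))
  have hmaps : Set.MapsTo h (ball 0 1) (ball 0 1) :=
    (mobius_mapsTo hga).comp (hm.comp (mobius_mapsTo hna))
  have h0 : h 0 = 0 := by
    simp only [hh, Function.comp_apply, mobius_zero_right, neg_neg, mobius_self]
  have key := Complex.norm_le_norm_of_mapsTo_ball hdiff (hmaps.mono_right ball_subset_closedBall) h0
    (z := mobius a b) (mobius_abs_lt_one ha hb)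
  have : h (mobius a b) = mobius (g a) (g b) := by
    simp only [hh, Function.comp_apply, mobius_neg_mobius ha hb]
  rwa [this] at key

lemma schwarz_pick {g : ℂ → ℂ} (hg : DifferentiableOn ℂ g (ball 0 1))
    (hm : Set.MapsTo g (ball 0 1) (ball 0 1)) {a b : ℂ}
    (ha : ‖a‖ < 1) (hb : ‖b‖ < 1) :
    poincareDist (g a) (g b) ≤ poincareDist a b := by
  rw [poincareDist_eq' (g a), poincareDist_eq' a]
  have h1 := schwarz_pick_abs hg hm ha hb
  have h2 := artanh_mono (norm_nonneg _) h1 (mobius_abs_lt_one ha hb)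
  linarith

lemma key_real {A B : ℝ} (hA0 : 0 ≤ A) (hA1 : A < 1) (hB0 : 0 ≤ B) (hB1 : B < 1) :
    ∀ Q N : ℝ, 0 ≤ Q → Q ≤ A + B → N ≤ 1 + A * B → 0 < N →
      N^2 = Q^2 + (1 - A^2) * (1 - B^2) → Q^2 * (1 + A * B)^2 ≤ (A + B)^2 * N^2 := by
  intro Q N hQ0 hQle hNle hNp hidQ
  have hAB0 : (0:ℝ) ≤ A + B := by linarith
  have h1 : Q^2 ≤ (A + B)^2 := by nlinarith
  have prod : (0:ℝ) ≤ (1 - A^2) * (1 - B^2) * ((A + B)^2 - Q^2) := by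
    have i1 : (0:ℝ) ≤ 1 - A^2 := by nlinarith
    have i2 : (0:ℝ) ≤ 1 - B^2 := by nlinarith
    have i3 : (0:ℝ) ≤ (A + B)^2 - Q^2 := by linarith
    positivity
  nlinarith [prod, hidQ, hNle, hNp, sq_nonneg Q]

set_option maxHeartbeats 1000000 in
lemma poincare_triangle {u v w : ℂ} (hu : ‖u‖ < 1) (hv : ‖v‖ < 1)
    (hw : ‖w‖ < 1) :
    poincareDist u w ≤ poincareDist u v + poincareDist v w := by
  set u' := mobius v u with hu'def
  set w' := mobius v w with hw'def
  set A := ‖u'‖ with hA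
  set B := ‖w'‖ with hB
  have hA1 : A < 1 := mobius_abs_lt_one hv hu
  have hB1 : B < 1 := mobius_abs_lt_one hv hw
  have hA0 : 0 ≤ A := norm_nonneg _
  have hB0 : 0 ≤ B := norm_nonneg _
  have hnv : ‖-v‖ < 1 := by rwa [norm_neg]
  -- step 1 : E u w ≤ E u' w'
  have step1 : ‖mobius u w‖ ≤ ‖mobius u' w'‖ := by
    have := schwarz_pick_abs (mobius_differentiableOn hnv) (mobius_mapsTo hnv)
      (a := u') (b := w') hA1 hB1
    rwa [mobius_neg_mobius hv hu, mobius_neg_mobius hv hw] at this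
  clear_value u' w' A B
  -- step 2 : E u' w' ≤ (A+B)/(1+A*B)
  set s : ℝ := (A + B) / (1 + A * B) with hs
  have hden : (0:ℝ) < 1 + A * B := by nlinarith
  have hs1 : s < 1 := by rw [hs, div_lt_one hden]; nlinarith
  have hs0 : 0 ≤ s := by positivity
  have step2 : ‖mobius u' w'‖ ≤ s := by
    have hQ : ‖w' - u'‖ ≤ A + B := by
      calc ‖w' - u'‖ ≤ ‖w'‖ + ‖u'‖ := by
            simpa [sub_eq_add_neg] using norm_add_le w' (-u')
        _ = A + B := by rw [hA, hB]; ring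
    have hN : ‖1 - (starRingEnd ℂ) u' * w'‖ ≤ 1 + A * B := by
      calc ‖1 - (starRingEnd ℂ) u' * w'‖
          ≤ ‖(1:ℂ)‖ + ‖(starRingEnd ℂ) u' * w'‖ := by
            simpa [sub_eq_add_neg] using norm_add_le 1 (-((starRingEnd ℂ) u' * w'))
        _ = 1 + A * B := by rw [norm_one, norm_mul, Complex.norm_conj, ← hA, ← hB]
    have hA1' : ‖u'‖ < 1 := by rw [← hA]; exact hA1
    have hB1' : ‖w'‖ < 1 := by rw [← hB]; exact hB1
    have hNpos : 0 < ‖1 - (starRingEnd ℂ) u' * w'‖ :=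
      norm_pos_iff.2 (denom_ne_zero hA1' hB1')
    have hid : (‖1 - (starRingEnd ℂ) u' * w'‖)^2
        = (‖w' - u'‖)^2 + (1 - A^2) * (1 - B^2) := by
      rw [Complex.sq_norm, Complex.sq_norm, hA, hB, Complex.sq_norm, Complex.sq_norm,
        normSq_identity]
    have key := key_real hA0 hA1 hB0 hB1
    have hsq : (‖mobius u' w'‖)^2 ≤ s^2 := by
      rw [mobius, norm_div, div_pow, hs, div_pow,
        div_le_div_iff₀ (pow_pos hNpos 2) (pow_pos hden 2)]
      exact key _ _ (norm_nonneg _) hQ hN hNpos hid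
    have hP0 : 0 ≤ ‖mobius u' w'‖ := norm_nonneg _
    calc ‖mobius u' w'‖
        = Real.sqrt ((‖mobius u' w'‖)^2) := (Real.sqrt_sq hP0).symm
      _ ≤ Real.sqrt (s^2) := Real.sqrt_le_sqrt hsq
      _ = s := Real.sqrt_sq hs0
  -- step 3 : assemble with artanh
  have e1 : ‖mobius u w‖ < 1 := lt_of_le_of_lt (le_trans step1 step2) hs1
  have m1 : artanh (‖mobius u w‖) ≤ artanh s :=
    artanh_mono (norm_nonneg _) (le_trans step1 step2) hs1
  have hadd : artanh s = artanh A + artanh B := artanh_add hA0 hA1 hB0 hB1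
  rw [poincareDist_eq' u w, poincareDist_eq u v, poincareDist_eq' v w,
    ← hu'def, ← hw'def, ← hA, ← hB]
  linarith [m1, hadd]

def JoinSet (T : Set ℂ) (x y : ℂ) : Set ℝ :=
  { t : ℝ | ∃ (k : ℕ) (φ : Fin (k + 1) → ℂ → ℂ) (a b : Fin (k + 1) → ℂ),
    (∀ i, DifferentiableOn ℂ (φ i) (Metric.ball (0 : ℂ) 1) ∧
      (φ i) '' (Metric.ball (0 : ℂ) 1) ⊆ T ∧
      a i ∈ Metric.ball (0 : ℂ) 1 ∧ b i ∈ Metric.ball (0 : ℂ) 1) ∧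
    φ 0 (a 0) = x ∧ φ (Fin.last k) (b (Fin.last k)) = y ∧
    (∀ i : Fin k, φ i.castSucc (b i.castSucc) = φ i.succ (a i.succ)) ∧
    t = ∑ i, poincareDist (a i) (b i) }

lemma disc_differentiable (c : ℂ) (ε : ℝ) :
    DifferentiableOn ℂ (fun w => c + (ε:ℂ) * w) (ball 0 1) :=
  ((differentiable_const c).add ((differentiable_const _).mul differentiable_id)).differentiableOn

lemma disc_image {T : Set ℂ} {c : ℂ} {ε : ℝ} (hε : 0 < ε) (hball : ball c ε ⊆ T) :
    (fun w => c + (ε:ℂ) * w) '' (ball (0:ℂ) 1) ⊆ T := by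
  rintro _ ⟨w, hw, rfl⟩
  apply hball
  rw [mem_ball_zero_iff] at hw
  rw [mem_ball, dist_eq, add_sub_cancel_left, norm_mul, Complex.norm_real, Real.norm_eq_abs,
    abs_of_pos hε]
  nlinarith [norm_nonneg w]

lemma disc_point_mem {c : ℂ} {ε : ℝ} (hε : 0 < ε) {x : ℂ} (hx : x ∈ ball c ε) :
    (x - c) / (ε:ℂ) ∈ ball (0:ℂ) 1 := by
  rw [mem_ball, dist_eq] at hx
  rw [mem_ball_zero_iff, norm_div, Complex.norm_real, Real.norm_eq_abs, abs_of_pos hε,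
    div_lt_one hε]
  exact hx

lemma disc_point_eval {c : ℂ} {ε : ℝ} (hε : 0 < ε) (x : ℂ) :
    c + (ε:ℂ) * ((x - c) / (ε:ℂ)) = x := by
  have : ((ε:ℝ):ℂ) ≠ 0 := Complex.ofReal_ne_zero.2 hε.ne'
  field_simp
  ring

lemma single_disc_mem {T : Set ℂ} {c : ℂ} {ε : ℝ} (hε : 0 < ε) (hball : ball c ε ⊆ T)
    {x y : ℂ} (hx : x ∈ ball c ε) (hy : y ∈ ball c ε) :
    poincareDist ((x - c)/(ε:ℂ)) ((y - c)/(ε:ℂ)) ∈ JoinSet T x y := by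
  refine ⟨0, fun _ w => c + (ε:ℂ) * w, fun _ => (x - c)/(ε:ℂ), fun _ => (y - c)/(ε:ℂ),
    fun i => ⟨disc_differentiable c ε, disc_image hε hball, disc_point_mem hε hx,
      disc_point_mem hε hy⟩, disc_point_eval hε x, disc_point_eval hε y,
    fun i => i.elim0, ?_⟩
  simp [Fin.sum_univ_one]

lemma joins_snoc' {T : Set ℂ} {x y : ℂ} {t : ℝ} (h : t ∈ JoinSet T x y)
    {c : ℂ} {ε : ℝ} (hε : 0 < ε) (hball : ball c ε ⊆ T) (hy : y ∈ ball c ε)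
    {y' : ℂ} (hy' : y' ∈ ball c ε) :
    t + poincareDist ((y - c)/(ε:ℂ)) ((y' - c)/(ε:ℂ)) ∈ JoinSet T x y' := by
  obtain ⟨k, φ, a, b, hcond, hx0, hyk, hchain, ht⟩ := h
  refine ⟨k + 1, Fin.snoc φ (fun w => c + (ε:ℂ) * w), Fin.snoc a ((y - c)/(ε:ℂ)),
    Fin.snoc b ((y' - c)/(ε:ℂ)), ?_, ?_, ?_, ?_, ?_⟩
  · intro i
    refine Fin.lastCases ?_ (fun j => ?_) i
    · simp only [Fin.snoc_last]
      exact ⟨disc_differentiable c ε, disc_image hε hball, disc_point_mem hε hy,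
        disc_point_mem hε hy'⟩
    · simp only [Fin.snoc_castSucc]
      exact hcond j
  · have h0 : (0 : Fin (k + 2)) = Fin.castSucc 0 := rfl
    rw [h0, Fin.snoc_castSucc, Fin.snoc_castSucc]
    exact hx0
  · simp only [Fin.snoc_last]
    exact disc_point_eval hε y'
  · intro i
    refine Fin.lastCases ?_ (fun j => ?_) i
    · rw [Fin.snoc_castSucc, Fin.snoc_castSucc, Fin.succ_last, Fin.snoc_last, Fin.snoc_last]
      rw [hyk, disc_point_eval hε y]
    · rw [Fin.succ_castSucc, Fin.snoc_castSucc, Fin.snoc_castSucc, Fin.snoc_castSucc,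
        Fin.snoc_castSucc]
      exact hchain j
  · rw [Fin.sum_univ_castSucc]
    simp only [Fin.snoc_castSucc, Fin.snoc_last]
    rw [ht]

lemma reach_all {T : Set ℂ} (hT : IsOpen T) (hTconn : IsPreconnected T) {x : ℂ} (hx : x ∈ T) :
    ∀ y ∈ T, (JoinSet T x y).Nonempty := by
  set C := {y : ℂ | y ∈ T ∧ (JoinSet T x y).Nonempty} with hC
  have hCopen : IsOpen C := by
    rw [Metric.isOpen_iff]
    rintro y ⟨hyT, hyJ⟩
    obtain ⟨ε, hε, hball⟩ := Metric.isOpen_iff.1 hT y hyT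
    refine ⟨ε, hε, fun y' hy' => ⟨hball hy', ?_⟩⟩
    obtain ⟨t, ht⟩ := hyJ
    exact ⟨_, joins_snoc' ht hε hball (mem_ball_self hε) hy'⟩
  have hVopen : IsOpen {y : ℂ | y ∈ T ∧ y ∉ C} := by
    rw [Metric.isOpen_iff]
    rintro y ⟨hyT, hyC⟩
    obtain ⟨ε, hε, hball⟩ := Metric.isOpen_iff.1 hT y hyT
    refine ⟨ε, hε, fun y' hy' => ⟨hball hy', fun hy'C => hyC ?_⟩⟩
    obtain ⟨t, ht⟩ := hy'C.2
    exact ⟨hyT, ⟨_, joins_snoc' ht hε hball hy' (mem_ball_self hε)⟩⟩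
  intro y hy
  by_contra hne
  have hyV : y ∈ {y : ℂ | y ∈ T ∧ y ∉ C} := ⟨hy, fun hyC => hne hyC.2⟩
  have hxC : x ∈ C := by
    obtain ⟨ε, hε, hball⟩ := Metric.isOpen_iff.1 hT x hx
    exact ⟨hx, ⟨_, single_disc_mem hε hball (mem_ball_self hε) (mem_ball_self hε)⟩⟩
  obtain ⟨zz, hzT, hzC, hzV⟩ := hTconn C _ hCopen hVopen
    (fun w hw => by by_cases h : w ∈ C; exact Or.inl h; exact Or.inr ⟨hw, h⟩)
    ⟨x, hx, hxC⟩ ⟨y, hy, hyV⟩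
  exact hzV.2 hzC

lemma poincare_chain : ∀ (n : ℕ) (y : Fin (n+1) → ℂ) (d : Fin n → ℝ),
    (∀ i, ‖y i‖ < 1) →
    (∀ i : Fin n, poincareDist (y i.castSucc) (y i.succ) ≤ d i) →
    poincareDist (y 0) (y (Fin.last n)) ≤ ∑ i, d i := by
  intro n
  induction n with
  | zero =>
    intro y d hy hd
    simp [Fin.last, poincareDist_self]
  | succ n ih =>
    intro y d hy hd
    have h1 := ih (fun i => y i.castSucc) (fun i => d i.castSucc)
      (fun i => hy _) (fun i => by
        simpa only [Function.comp, Fin.succ_castSucc] using hd i.castSucc)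
    have h2 := hd (Fin.last n)
    have htri := poincare_triangle (hy 0) (hy ((Fin.last n).castSucc)) (hy (Fin.last (n+1)))
    rw [Fin.sum_univ_castSucc]
    have hlast : y (Fin.last (n+1)) = y (Fin.last n).succ := by rw [Fin.succ_last]
    have h0 : (fun i : Fin (n+1) => y i.castSucc) 0 = y 0 := by
      simp [Fin.castSucc_zero]
    rw [Fin.castSucc_zero] at h1
    rw [hlast] at htri ⊢
    linarith

lemma sum_ge {T : Set ℂ} {F : ℂ → ℂ} (hF : DifferentiableOn ℂ F T)
    (hmaps : ∀ w ∈ T, ‖F w‖ < 1) {x y : ℂ} {t : ℝ}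
    (ht : t ∈ JoinSet T x y) : poincareDist (F x) (F y) ≤ t := by
  obtain ⟨k, φ, a, b, hcond, hx0, hyk, hchain, rfl⟩ := ht
  have hφmem : ∀ (i : Fin (k+1)) (w : ℂ), w ∈ ball (0:ℂ) 1 → φ i w ∈ T :=
    fun i w hw => (hcond i).2.1 ⟨w, hw, rfl⟩
  set y' : Fin (k+2) → ℂ := Fin.cons (F (φ 0 (a 0))) (fun j : Fin (k+1) => F (φ j (b j)))
    with hy'
  have habs : ∀ (i : Fin (k+1)) (w : ℂ), w ∈ ball (0:ℂ) 1 → ‖F (φ i w)‖ < 1 :=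
    fun i w hw => hmaps _ (hφmem i w hw)
  have hy'lt : ∀ i, ‖y' i‖ < 1 := by
    intro i
    refine Fin.cases ?_ (fun j => ?_) i
    · rw [hy', Fin.cons_zero]
      exact habs 0 (a 0) (hcond 0).2.2.1
    · rw [hy', Fin.cons_succ]
      exact habs j (b j) (hcond j).2.2.2
  have hcastSucc : ∀ i : Fin (k+1), y' i.castSucc = F (φ i (a i)) := by
    intro i
    refine Fin.cases ?_ (fun j => ?_) i
    · rw [Fin.castSucc_zero, hy', Fin.cons_zero]
    · rw [← Fin.succ_castSucc, hy', Fin.cons_succ, hchain j]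
  have hstep : ∀ i : Fin (k+1), poincareDist (y' i.castSucc) (y' i.succ)
      ≤ poincareDist (a i) (b i) := by
    intro i
    rw [hcastSucc i, hy', Fin.cons_succ]
    have hai : ‖a i‖ < 1 := by
      have := (hcond i).2.2.1; rwa [mem_ball_zero_iff] at this
    have hbi : ‖b i‖ < 1 := by
      have := (hcond i).2.2.2; rwa [mem_ball_zero_iff] at this
    have := schwarz_pick (g := fun w => F (φ i w))
      (hF.comp (hcond i).1 (fun w hw => hφmem i w hw))
      (fun w hw => by
        rw [mem_ball_zero_iff]
        exact habs i w hw) hai hbi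
    exact this
  have := poincare_chain (k+1) y' (fun i => poincareDist (a i) (b i)) hy'lt hstep
  have hstart : y' 0 = F x := by rw [hy']; simp only [Fin.cons_zero]; rw [hx0]
  have hend : y' (Fin.last (k+1)) = F y := by
    rw [← Fin.succ_last, hy', Fin.cons_succ, hyk]
  rwa [hstart, hend] at this

open Filter in
lemma key_bound {D : Set ℂ} (hDopen : IsOpen D) (hDconn : IsConnected D) {p : ℂ} (hp : p ∉ D)
    (hopen : IsOpen (insert p D)) {z : ℂ} (hz : z ∈ D) {r : ℝ} {f : ℂ → ℂ}
    (hdiff : DifferentiableOn ℂ f D) (hinj : Set.InjOn f D) (himg : f '' D ⊆ ball (0:ℂ) 1)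
    (hfz : f z = 0) (hr : 0 < r) (hball : ball (0:ℂ) r ⊆ f '' D) :
    ∃ q : ℂ, r ≤ ‖q‖ ∧ ‖q‖ < 1 ∧
      ∀ t ∈ JoinSet (insert p D) z p, 2 * artanh (‖q‖) ≤ t := by
  set T := insert p D with hT
  have hpT : p ∈ T := Set.mem_insert p D
  have hfD : ∀ w ∈ D, ‖f w‖ < 1 := by
    intro w hw
    have := himg ⟨w, hw, rfl⟩
    rwa [mem_ball_zero_iff] at this
  obtain ⟨ε₀, hε₀, hballp⟩ := Metric.isOpen_iff.1 hopen p hpT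
  -- p is in the closure of D
  have hmemD : ∀ w : ℂ, w ∈ ball p ε₀ → w ≠ p → w ∈ D := by
    intro w hw hne
    rcases hballp hw with h | h
    · exact absurd h hne
    · exact h
  have hpc : p ∈ closure D := by
    rw [Metric.mem_closure_iff]
    intro δ hδ
    have hη : 0 < min ε₀ δ / 2 := by
      have := lt_min hε₀ hδ; positivity
    refine ⟨p + (min ε₀ δ / 2 : ℝ), hmemD _ ?_ ?_, ?_⟩
    · rw [mem_ball, dist_eq]
      simp only [add_sub_cancel_left, Complex.norm_real, Real.norm_eq_abs, abs_of_pos hη]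
      calc min ε₀ δ / 2 < min ε₀ δ := by linarith
        _ ≤ ε₀ := min_le_left _ _
    · intro h
      have : ((min ε₀ δ / 2 : ℝ) : ℂ) = 0 := by
        have := congrArg (· - p) h; simpa using this
      rw [Complex.ofReal_eq_zero] at this
      linarith
    · rw [dist_eq]
      simp only [sub_add_cancel_left, norm_neg, Complex.norm_real, Real.norm_eq_abs, abs_of_pos hη]
      calc min ε₀ δ / 2 < min ε₀ δ := by linarith
        _ ≤ δ := min_le_right _ _
  have hTsub : T ⊆ closure D := by
    rintro w (rfl | hw)
    · exact hpc
    · exact subset_closure hw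
  have hTconn : IsPreconnected T :=
    (hDconn.subset_closure (Set.subset_insert p D) hTsub).isPreconnected
  -- the extension F
  set F := Function.update f p (limUnder (𝓝[≠] p) f) with hF
  have hFD : ∀ w ∈ D, F w = f w := by
    intro w hw
    exact Function.update_of_ne (fun h => hp (by rw [← h]; exact hw)) _ _
  have hTD : T \ {p} = D := by
    rw [hT, Set.insert_diff_self_of_notMem]
    exact hp
  have hFdiff : DifferentiableOn ℂ F T := by
    apply Complex.differentiableOn_update_limUnder_of_bddAbove (hopen.mem_nhds hpT)
    · rw [hTD]; exact hdiff
    · rw [hTD]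
      refine ⟨1, ?_⟩
      rintro _ ⟨w, hw, rfl⟩
      exact le_of_lt (by simpa using hfD w hw)
  have hFz : F z = 0 := by rw [hFD z hz, hfz]
  -- |F| < 1 on T
  have hcont : ContinuousAt F p :=
    (hFdiff.differentiableAt (hopen.mem_nhds hpT)).continuousAt
  have hnb : (𝓝[D] p).NeBot := mem_closure_iff_nhdsWithin_neBot.1 hpc
  have hFp_le : ‖F p‖ ≤ 1 := by
    have htend : Tendsto (fun w => ‖F w‖) (𝓝[D] p) (𝓝 (‖F p‖)) :=
      (continuous_norm.continuousAt.comp hcont).continuousWithinAt.tendsto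
    refine le_of_tendsto htend ?_
    filter_upwards [self_mem_nhdsWithin] with w hw
    rw [hFD w hw]
    exact le_of_lt (hfD w hw)
  have hlt : ∀ w ∈ T, ‖F w‖ < 1 := by
    have hFp_lt : ‖F p‖ < 1 := by
      rcases lt_or_eq_of_le hFp_le with h | h
      · exact h
      · exfalso
        have hmax : IsMaxOn (norm ∘ F) T p := by
          intro w hw
          simp only [Function.comp_apply, Set.mem_setOf_eq]
          rcases hw with rfl | hw
          · exact le_refl _
          · rw [hFD w hw, h]
            exact le_of_lt (hfD w hw)
        have heq := Complex.eqOn_of_isPreconnected_of_isMaxOn_norm hTconn hopen hFdiff hpT hmax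
        have h2 := heq (Set.mem_insert_of_mem p hz)
        simp only [Function.const_apply] at h2
        rw [hFz] at h2
        rw [← h2] at h
        simp at h
    rintro w (rfl | hw)
    · exact hFp_lt
    · rw [hFD w hw]; exact hfD w hw
  -- F is an open map
  have hD2 : ∃ z' ∈ D, z' ≠ z := by
    obtain ⟨δ, hδ, hballz⟩ := Metric.isOpen_iff.1 hDopen z hz
    refine ⟨z + (δ/2 : ℝ), hballz ?_, ?_⟩
    · rw [mem_ball, dist_eq]
      simp only [add_sub_cancel_left, Complex.norm_real, Real.norm_eq_abs]
      rw [abs_of_pos (by linarith)]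
      linarith
    · intro h
      have : ((δ/2 : ℝ) : ℂ) = 0 := by
        have := congrArg (· - z) h; simpa using this
      rw [Complex.ofReal_eq_zero] at this
      linarith
  have hnotconst : ¬∃ v, ∀ w ∈ T, F w = v := by
    rintro ⟨v, hv⟩
    obtain ⟨z', hz', hne⟩ := hD2
    apply hne
    apply hinj hz' hz
    rw [← hFD z' hz', ← hFD z hz, hv z' (Set.mem_insert_of_mem p hz'),
      hv z (Set.mem_insert_of_mem p hz)]
  have hopenmap : ∀ s ⊆ T, IsOpen s → IsOpen (F '' s) :=
    ((hFdiff.analyticOnNhd hopen).is_constant_or_isOpen hTconn).resolve_left hnotconst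
  -- F p is not a value of f on D
  have hq_not : F p ∉ f '' D := by
    rintro ⟨w₀, hw₀, hw₀eq⟩
    have hpw : p ≠ w₀ := fun h => hp (h ▸ hw₀)
    have hdpw : 0 < dist p w₀ := dist_pos.2 hpw
    obtain ⟨δ₂, hδ₂, hballw⟩ := Metric.isOpen_iff.1 hDopen w₀ hw₀
    set δa := min ε₀ (dist p w₀ / 2) with hδa
    set δb := min δ₂ (dist p w₀ / 2) with hδb
    have hδa0 : 0 < δa := lt_min hε₀ (by linarith)
    have hδb0 : 0 < δb := lt_min hδ₂ (by linarith)
    have hU1T : ball p δa ⊆ T := fun w hw => hballp (ball_subset_ball (min_le_left _ _) hw)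
    have hU2D : ball w₀ δb ⊆ D := fun w hw => hballw (ball_subset_ball (min_le_left _ _) hw)
    have hO1 : IsOpen (F '' ball p δa) := hopenmap _ hU1T isOpen_ball
    have hO2 : IsOpen (F '' ball w₀ δb) := hopenmap _
      (fun w hw => Set.mem_insert_of_mem p (hU2D hw)) isOpen_ball
    have hFpO : F p ∈ F '' ball p δa ∩ F '' ball w₀ δb := by
      constructor
      · exact ⟨p, mem_ball_self hδa0, rfl⟩
      · refine ⟨w₀, mem_ball_self hδb0, ?_⟩
        rw [hFD w₀ hw₀, hw₀eq]
    obtain ⟨η, hη, hb⟩ := Metric.isOpen_iff.1 (hO1.inter hO2) _ hFpO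
    have hvO : F p + (η/2 : ℝ) ∈ F '' ball p δa ∩ F '' ball w₀ δb := by
      apply hb
      rw [mem_ball, dist_eq]
      simp only [add_sub_cancel_left, Complex.norm_real, Real.norm_eq_abs]
      rw [abs_of_pos (by linarith)]
      linarith
    have hvne : F p + (η/2 : ℝ) ≠ F p := by
      intro h
      have : ((η/2 : ℝ) : ℂ) = 0 := by
        have := congrArg (· - F p) h; simpa using this
      rw [Complex.ofReal_eq_zero] at this
      linarith
    obtain ⟨⟨ζ, hζ, hζv⟩, ⟨w₁, hw₁, hw₁v⟩⟩ := hvO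
    have hζp : ζ ≠ p := by
      intro h
      rw [h] at hζv
      exact hvne hζv.symm
    have hζD : ζ ∈ D := by
      rcases hU1T hζ with h | h
      · exact absurd h hζp
      · exact h
    have hw₁D : w₁ ∈ D := hU2D hw₁
    have heq : ζ = w₁ := by
      apply hinj hζD hw₁D
      rw [← hFD ζ hζD, ← hFD w₁ hw₁D, hζv, hw₁v]
    have h1 : dist ζ p < dist p w₀ / 2 := lt_of_lt_of_le (mem_ball.1 hζ) (min_le_right _ _)
    have h2 : dist w₁ w₀ < dist p w₀ / 2 := lt_of_lt_of_le (mem_ball.1 hw₁) (min_le_right _ _)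
    rw [heq] at h1
    have := dist_triangle p w₁ w₀
    rw [dist_comm p w₁] at this
    linarith
  have hrq : r ≤ ‖F p‖ := by
    by_contra h
    push_neg at h
    exact hq_not (hball (by rwa [mem_ball_zero_iff]))
  refine ⟨F p, hrq, hlt p hpT, ?_⟩
  intro t ht
  have := sum_ge hFdiff hlt ht
  rwa [hFz, poincareDist_zero_left] at this

lemma kobayashiDist_eq (T : Set ℂ) (x y : ℂ) :
    kobayashiDist T x y = sInf (JoinSet T x y) := rfl

lemma joinset_nonneg {T : Set ℂ} {x y : ℂ} : ∀ t ∈ JoinSet T x y, 0 ≤ t := by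
  rintro t ⟨k, φ, a, b, _, _, _, _, rfl⟩
  exact Finset.sum_nonneg fun i _ => poincareDist_nonneg _ _

lemma mem_closure_of_insert_open {D : Set ℂ} {p : ℂ} (hopen : IsOpen (insert p D)) :
    p ∈ closure D := by
  obtain ⟨ε₀, hε₀, hballp⟩ := Metric.isOpen_iff.1 hopen p (Set.mem_insert p D)
  rw [Metric.mem_closure_iff]
  intro δ hδ
  have hη : 0 < min ε₀ δ / 2 := by
    have := lt_min hε₀ hδ; positivity
  have hne : p + (min ε₀ δ / 2 : ℝ) ≠ p := by
    intro h
    have : ((min ε₀ δ / 2 : ℝ) : ℂ) = 0 := by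
      have := congrArg (· - p) h; simpa using this
    rw [Complex.ofReal_eq_zero] at this
    linarith
  refine ⟨p + (min ε₀ δ / 2 : ℝ), ?_, ?_⟩
  · have hmem : p + (min ε₀ δ / 2 : ℝ) ∈ ball p ε₀ := by
      rw [mem_ball, dist_eq]
      simp only [add_sub_cancel_left, Complex.norm_real, Real.norm_eq_abs, abs_of_pos hη]
      calc min ε₀ δ / 2 < min ε₀ δ := by linarith
        _ ≤ ε₀ := min_le_left _ _
    rcases hballp hmem with h | h
    · exact absurd h hne
    · exact h
  · rw [dist_eq]
    simp only [sub_add_cancel_left, norm_neg, Complex.norm_real, Real.norm_eq_abs, abs_of_pos hη]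
    calc min ε₀ δ / 2 < min ε₀ δ := by linarith
      _ ≤ δ := min_le_right _ _


/-- Let `D ⊆ ℂ` be a bounded domain and `p ∉ D` a point such that
`D̃ = D ∪ {p}` is open (an isolated point of the complement). Then
`s_D(z) ≤ tanh(K_{D̃}(z,p)/2)` for all `z ∈ D`; in particular `s_D(z) → 0` as `z → p`. -/
theorem stmt_13 (D : Set ℂ)
    (hDopen : IsOpen D) (hDconn : IsConnected D) (hDbd : Bornology.IsBounded D)
    (p : ℂ) (hp : p ∉ D) (hopen : IsOpen (insert p D)) :
    (∀ z ∈ D, squeezingFn D z ≤ Real.tanh (kobayashiDist (insert p D) z p / 2)) ∧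
    Filter.Tendsto (squeezingFn D) (nhdsWithin p D) (nhds 0) := by
  have hTconn : IsPreconnected (insert p D) := by
    refine (hDconn.subset_closure (Set.subset_insert p D) ?_).isPreconnected
    rintro w (rfl | hw)
    · exact mem_closure_of_insert_open hopen
    · exact subset_closure hw
  have hK0 : ∀ z : ℂ, 0 ≤ kobayashiDist (insert p D) z p := by
    intro z
    rw [kobayashiDist_eq]
    exact Real.sInf_nonneg joinset_nonneg
  have hpart1 : ∀ z ∈ D, squeezingFn D z ≤ Real.tanh (kobayashiDist (insert p D) z p / 2) := by
    intro z hz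
    apply Real.sSup_le
    · rintro r ⟨f, hdiff, hinj, himg, hfz, hr, hball⟩
      obtain ⟨q, hrq, hq1, hbnd⟩ :=
        key_bound hDopen hDconn hp hopen hz hdiff hinj himg hfz hr hball
      have hq0 : 0 ≤ ‖q‖ := norm_nonneg q
      have hne : (JoinSet (insert p D) z p).Nonempty :=
        reach_all hopen hTconn (Set.mem_insert_of_mem p hz) p (Set.mem_insert p D)
      have hK : 2 * artanh (‖q‖) ≤ kobayashiDist (insert p D) z p := by
        rw [kobayashiDist_eq]
        exact le_csInf hne hbnd
      calc r ≤ ‖q‖ := hrq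
        _ = Real.tanh (artanh (‖q‖)) := (tanh_artanh hq0 hq1).symm
        _ ≤ Real.tanh (kobayashiDist (insert p D) z p / 2) := by
            apply tanh_mono.monotone; linarith
    · have := tanh_mono.monotone (by linarith [hK0 z] : (0:ℝ) ≤ kobayashiDist (insert p D) z p / 2)
      rwa [Real.tanh_zero] at this
  refine ⟨hpart1, ?_⟩
  obtain ⟨ε₀, hε₀, hballp⟩ := Metric.isOpen_iff.1 hopen p (Set.mem_insert p D)
  have hlow : ∀ z ∈ D, 0 ≤ squeezingFn D z := by
    intro z hzD
    have hbddA : BddAbove { r : ℝ | ∃ f : ℂ → ℂ,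
        DifferentiableOn ℂ f D ∧ Set.InjOn f D ∧ f '' D ⊆ ball (0 : ℂ) 1 ∧ f z = 0 ∧
        0 < r ∧ ball (0 : ℂ) r ⊆ f '' D } := by
      refine ⟨1, ?_⟩
      rintro r ⟨f, _, _, himg, _, hrpos, hball⟩
      by_contra hgt
      push_neg at hgt
      have hu : (((1 + r)/2 : ℝ) : ℂ) ∈ ball (0:ℂ) r := by
        rw [mem_ball_zero_iff, Complex.norm_real, Real.norm_eq_abs,
          abs_of_pos (by linarith)]
        linarith
      have := himg (hball hu)
      rw [mem_ball_zero_iff, Complex.norm_real, Real.norm_eq_abs,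
        abs_of_pos (by linarith)] at this
      linarith
    obtain ⟨R, hR⟩ := hDbd.subset_closedBall z
    have hR'0 : (0:ℝ) < |R| + 1 := by positivity
    have hR'ne : ((|R| + 1 : ℝ) : ℂ) ≠ 0 := Complex.ofReal_ne_zero.2 hR'0.ne'
    obtain ⟨δ, hδ, hballz⟩ := Metric.isOpen_iff.1 hDopen z hzD
    have hmem : δ / (|R| + 1) ∈ { r : ℝ | ∃ f : ℂ → ℂ,
        DifferentiableOn ℂ f D ∧ Set.InjOn f D ∧ f '' D ⊆ ball (0 : ℂ) 1 ∧ f z = 0 ∧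
        0 < r ∧ ball (0 : ℂ) r ⊆ f '' D } := by
      refine ⟨fun w => (w - z) / ((|R| + 1 : ℝ) : ℂ), ?_, ?_, ?_, ?_, by positivity, ?_⟩
      · exact ((differentiable_id.sub_const z).div_const _).differentiableOn
      · intro a _ b _ h
        have h2 := (div_eq_div_iff hR'ne hR'ne).1 h
        exact sub_left_injective (mul_right_cancel₀ hR'ne h2)
      · rintro _ ⟨w, hw, rfl⟩
        rw [mem_ball_zero_iff, norm_div, Complex.norm_real, Real.norm_eq_abs,
          abs_of_pos hR'0, div_lt_one hR'0]
        have := hR hw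
        rw [mem_closedBall, Complex.dist_eq] at this
        calc ‖w - z‖ ≤ R := this
          _ ≤ |R| := le_abs_self R
          _ < |R| + 1 := by linarith
      · simp
      · intro u hu
        rw [mem_ball_zero_iff] at hu
        refine ⟨z + ((|R| + 1 : ℝ) : ℂ) * u, hballz ?_, ?_⟩
        · rw [mem_ball, dist_eq, add_sub_cancel_left, norm_mul, Complex.norm_real, Real.norm_eq_abs,
            abs_of_pos hR'0]
          rw [mul_comm]
          rwa [lt_div_iff₀ hR'0] at hu
        · show (z + ((|R| + 1 : ℝ) : ℂ) * u - z) / ((|R| + 1 : ℝ) : ℂ) = u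
          rw [add_sub_cancel_left, mul_comm, mul_div_assoc, div_self hR'ne, mul_one]
    have := le_csSup hbddA hmem
    have hpos : (0:ℝ) ≤ δ / (|R| + 1) := by positivity
    exact le_trans hpos this
  have hupper : ∀ z ∈ D, z ∈ ball p ε₀ → squeezingFn D z ≤ dist z p / ε₀ := by
    intro z hzD hzball
    have hz' : dist z p < ε₀ := mem_ball.1 hzball
    have hd0 : 0 ≤ dist z p := dist_nonneg
    have hKle : kobayashiDist (insert p D) z p ≤ 2 * artanh (dist z p / ε₀) := by
      rw [kobayashiDist_eq]
      have hm := single_disc_mem hε₀ hballp hzball (mem_ball_self hε₀)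
      have hval : poincareDist ((z - p)/((ε₀:ℝ):ℂ)) ((p - p)/((ε₀:ℝ):ℂ))
          = 2 * artanh (dist z p / ε₀) := by
        rw [sub_self, zero_div, poincareDist_zero_right, norm_div, Complex.norm_real, Real.norm_eq_abs,
          abs_of_pos hε₀, Complex.dist_eq]
      rw [← hval]
      exact csInf_le ⟨0, fun t ht => joinset_nonneg t ht⟩ hm
    have hds : dist z p / ε₀ < 1 := by rw [div_lt_one hε₀]; exact hz'
    have hds0 : 0 ≤ dist z p / ε₀ := by positivity
    have h2 : Real.tanh (kobayashiDist (insert p D) z p / 2)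
        ≤ Real.tanh (artanh (dist z p / ε₀)) := by
      apply tanh_mono.monotone; linarith [hKle]
    rw [tanh_artanh hds0 hds] at h2
    exact le_trans (hpart1 z hzD) h2
  apply squeeze_zero'
  · filter_upwards [self_mem_nhdsWithin] with w hw
    exact hlow w hw
  · filter_upwards [self_mem_nhdsWithin,
      mem_nhdsWithin_of_mem_nhds (ball_mem_nhds p hε₀)] with w hw hwb
    exact hupper w hw hwb
  · have h1 : Filter.Tendsto (fun w : ℂ => dist w p) (nhdsWithin p D) (nhds 0) := by
      have h2 : Filter.Tendsto (fun w : ℂ => dist w p) (nhds p) (nhds (dist p p)) :=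
        (Continuous.dist continuous_id (continuous_const : Continuous fun _ : ℂ => p)).tendsto p
      rw [dist_self] at h2
      exact h2.mono_left nhdsWithin_le_nhds
    have := h1.div_const ε₀
    rwa [zero_div] at this
end
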